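/- Let A₁, A₂ : ℝ → ℂ be differentiable functions satisfying the ODE system i Aⱼ' = Fⱼ(A₁,A₂) for j=1,2, where F₁, F₂ are general real-coefficient cubic gauge-invariant nonlinearities with associated 3×3 real matrix 𝒜. Set ρ₁=|A₁|², ρ₂=|A₂|², R=2Re(conj(A₁)A₂), I=2Im(conj(A₁)A₂). Then for any (a,b,c) ∈ ℝ³: d/dt [a ρ₁ + b R + c ρ₂] = I · (ρ₁, R, ρ₂) · 𝒜 · (a,b,c)ᵀ. -/

import Mathlib

open Matrix

/-- The general gauge-invariant cubic nonlinearity with six real coefficients. -/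
noncomputable def Fcub (m₁ m₂ m₃ m₄ m₅ m₆ : ℝ) (u₁ u₂ : ℂ) : ℂ :=
  ((m₁ * Complex.normSq u₁ : ℝ) : ℂ) * u₁ + ((m₂ * Complex.normSq u₁ : ℝ) : ℂ) * u₂
    + (m₃ : ℂ) * u₁ ^ 2 * (starRingEnd ℂ) u₂ + ((m₄ * Complex.normSq u₂ : ℝ) : ℂ) * u₁
    + (m₅ : ℂ) * u₂ ^ 2 * (starRingEnd ℂ) u₁ + ((m₆ * Complex.normSq u₂ : ℝ) : ℂ) * u₂

/-- The matrix part of the matrix-vector representation of the cubic system. -/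
def Amat (l₁ l₂ l₃ l₄ l₅ l₆ l₇ l₈ l₉ l₁₀ l₁₁ l₁₂ : ℝ) : Matrix (Fin 3) (Fin 3) ℝ :=
  !![l₂ - l₃, -l₁ + l₈ - l₉, -l₇;
     l₅, -l₃ + l₁₁, -l₉;
     l₆, -l₄ + l₅ + l₁₂, -l₁₀ + l₁₁]

set_option maxHeartbeats 2000000 in
theorem stmt4 (l₁ l₂ l₃ l₄ l₅ l₆ l₇ l₈ l₉ l₁₀ l₁₁ l₁₂ : ℝ)
    (A₁ A₂ A₁' A₂' : ℝ → ℂ)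
    (hd₁ : ∀ t, HasDerivAt A₁ (A₁' t) t)
    (hd₂ : ∀ t, HasDerivAt A₂ (A₂' t) t)
    (hode₁ : ∀ t, Complex.I * A₁' t = Fcub l₁ l₂ l₃ l₄ l₅ l₆ (A₁ t) (A₂ t))
    (hode₂ : ∀ t, Complex.I * A₂' t = Fcub l₇ l₈ l₉ l₁₀ l₁₁ l₁₂ (A₁ t) (A₂ t))
    (a b c : ℝ) :
    let 𝒜 : Matrix (Fin 3) (Fin 3) ℝ := Amat l₁ l₂ l₃ l₄ l₅ l₆ l₇ l₈ l₉ l₁₀ l₁₁ l₁₂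
    let ρ₁ : ℝ → ℝ := fun t => Complex.normSq (A₁ t)
    let ρ₂ : ℝ → ℝ := fun t => Complex.normSq (A₂ t)
    let R : ℝ → ℝ := fun t => 2 * ((starRingEnd ℂ) (A₁ t) * A₂ t).re
    let I : ℝ → ℝ := fun t => 2 * ((starRingEnd ℂ) (A₁ t) * A₂ t).im
    ∀ t : ℝ,
      HasDerivAt (fun s => a * ρ₁ s + b * R s + c * ρ₂ s)
        (I t * (![ρ₁ t, R t, ρ₂ t] ⬝ᵥ 𝒜.mulVec ![a, b, c])) t := by
  intro 𝒜 ρ₁ ρ₂ R I t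
  have hc1 : HasDerivAt (fun s => (starRingEnd ℂ) (A₁ s)) ((starRingEnd ℂ) (A₁' t)) t :=
    Complex.conjCLE.toContinuousLinearMap.hasFDerivAt.comp_hasDerivAt t (hd₁ t)
  have hc2 : HasDerivAt (fun s => (starRingEnd ℂ) (A₂ s)) ((starRingEnd ℂ) (A₂' t)) t :=
    Complex.conjCLE.toContinuousLinearMap.hasFDerivAt.comp_hasDerivAt t (hd₂ t)
  have h11 : HasDerivAt (fun s => ((starRingEnd ℂ) (A₁ s) * A₁ s).re)
      (((starRingEnd ℂ) (A₁' t) * A₁ t + (starRingEnd ℂ) (A₁ t) * A₁' t).re) t :=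
    Complex.reCLM.hasFDerivAt.comp_hasDerivAt t (hc1.mul (hd₁ t))
  have h12 : HasDerivAt (fun s => ((starRingEnd ℂ) (A₁ s) * A₂ s).re)
      (((starRingEnd ℂ) (A₁' t) * A₂ t + (starRingEnd ℂ) (A₁ t) * A₂' t).re) t :=
    Complex.reCLM.hasFDerivAt.comp_hasDerivAt t (hc1.mul (hd₂ t))
  have h22 : HasDerivAt (fun s => ((starRingEnd ℂ) (A₂ s) * A₂ s).re)
      (((starRingEnd ℂ) (A₂' t) * A₂ t + (starRingEnd ℂ) (A₂ t) * A₂' t).re) t :=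
    Complex.reCLM.hasFDerivAt.comp_hasDerivAt t (hc2.mul (hd₂ t))
  have hρ₁ : HasDerivAt ρ₁
      (((starRingEnd ℂ) (A₁' t) * A₁ t + (starRingEnd ℂ) (A₁ t) * A₁' t).re) t := by
    have : ρ₁ = fun s => ((starRingEnd ℂ) (A₁ s) * A₁ s).re := by
      funext s
      show Complex.normSq (A₁ s) = _
      simp [Complex.normSq_apply, Complex.mul_re]
    rw [this]; exact h11
  have hρ₂ : HasDerivAt ρ₂
      (((starRingEnd ℂ) (A₂' t) * A₂ t + (starRingEnd ℂ) (A₂ t) * A₂' t).re) t := by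
    have : ρ₂ = fun s => ((starRingEnd ℂ) (A₂ s) * A₂ s).re := by
      funext s
      show Complex.normSq (A₂ s) = _
      simp [Complex.normSq_apply, Complex.mul_re]
    rw [this]; exact h22
  have hR : HasDerivAt R
      (2 * ((starRingEnd ℂ) (A₁' t) * A₂ t + (starRingEnd ℂ) (A₁ t) * A₂' t).re) t :=
    h12.const_mul 2
  have hsum := ((hρ₁.const_mul a).add (hR.const_mul b)).add ((hρ₂.const_mul c))
  convert hsum using 1
  case e'_4 => rfl
  case e'_5 => rfl
  case e'_8 => rfl
  have hA1 : A₁' t = -Complex.I * Fcub l₁ l₂ l₃ l₄ l₅ l₆ (A₁ t) (A₂ t) := by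
    rw [← hode₁ t,
      show -Complex.I * (Complex.I * A₁' t) = -(Complex.I * Complex.I) * A₁' t from by ring,
      Complex.I_mul_I]
    ring
  have hA2 : A₂' t = -Complex.I * Fcub l₇ l₈ l₉ l₁₀ l₁₁ l₁₂ (A₁ t) (A₂ t) := by
    rw [← hode₂ t,
      show -Complex.I * (Complex.I * A₂' t) = -(Complex.I * Complex.I) * A₂' t from by ring,
      Complex.I_mul_I]
    ring
  rw [hA1, hA2]
  simp only [I, ρ₁, ρ₂, R, 𝒜, Amat, Matrix.mulVec, dotProduct, Fin.sum_univ_three,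
    Matrix.cons_val_zero, Matrix.cons_val_one, Matrix.head_cons, Matrix.cons_val_two,
    Matrix.tail_cons, Matrix.head_fin_const, Matrix.cons_val', Matrix.empty_val',
    Matrix.cons_val_fin_one, Matrix.of_apply, Fcub, Complex.add_re, Complex.add_im, Complex.mul_re,
    Complex.mul_im, Complex.neg_re, Complex.neg_im, Complex.I_re, Complex.I_im,
    Complex.ofReal_re, Complex.ofReal_im, Complex.conj_re, Complex.conj_im,
    Complex.normSq_apply, pow_two]
  ring
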